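/- The function h(t) := exp(2·(log λ₁(t))² − 8t·log λ₁(t)/(t²+4) + 8), where λ₁(t) := (√(t²+4)+t)/2, is not convex on ℝ. -/
import Mathlib


/-- The larger eigenvalue `λ₁(t) = (√(t²+4)+t)/2` of the right stretch tensor of simple shear. -/
noncomputable def lam1 (t : ℝ) : ℝ := (Real.sqrt (t ^ 2 + 4) + t) / 2

/-- The additive logarithmic exponentiated Hencky energy along simple shear at the plastic
stretch `U_p = diag(e⁻², e²)`. -/
noncomputable def hEnergy (t : ℝ) : ℝ :=
  Real.exp (2 * (Real.log (lam1 t)) ^ 2 - 8 * t * Real.log (lam1 t) / (t ^ 2 + 4) + 8)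

lemma sqrt8_eq : Real.sqrt 8 = 2 * Real.sqrt 2 := by
  rw [show (8:ℝ) = 2^2 * 2 by norm_num, Real.sqrt_mul (by positivity), Real.sqrt_sq (by norm_num)]

lemma lam1_two : lam1 2 = Real.sqrt 2 + 1 := by
  simp only [lam1]
  rw [show (2:ℝ)^2 + 4 = 8 by norm_num, sqrt8_eq]; ring

lemma lam1_neg_two : lam1 (-2) = Real.sqrt 2 - 1 := by
  simp only [lam1]
  rw [show (-2:ℝ)^2 + 4 = 8 by norm_num, sqrt8_eq]; ring

lemma log_neg_two : Real.log (lam1 (-2)) = - Real.log (lam1 2) := by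
  rw [lam1_two, lam1_neg_two]
  have h2 : Real.sqrt 2 ^ 2 = 2 := Real.sq_sqrt (by norm_num)
  have : Real.sqrt 2 - 1 = (Real.sqrt 2 + 1)⁻¹ :=
    eq_inv_of_mul_eq_one_left (by nlinarith)
  rw [this, Real.log_inv]

lemma hEnergy_zero : hEnergy 0 = Real.exp 8 := by
  have h1 : lam1 0 = 1 := by
    simp only [lam1]
    rw [show (0:ℝ)^2 + 4 = 2^2 by norm_num, Real.sqrt_sq (by norm_num)]; ring
  simp [hEnergy, h1]

theorem stmt17 : ¬ ConvexOn ℝ Set.univ hEnergy := by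
  intro hc
  have key := hc.2 (Set.mem_univ (-2)) (Set.mem_univ 2)
    (by norm_num : (0:ℝ) ≤ 1/2) (by norm_num : (0:ℝ) ≤ 1/2) (by norm_num)
  have h0 : (1/2 : ℝ) • (-2 : ℝ) + (1/2 : ℝ) • (2:ℝ) = 0 := by norm_num
  rw [h0] at key
  set L := Real.log (lam1 2) with hL
  have hE2 : hEnergy 2 = Real.exp (2 * L^2 - 2 * L + 8) := by
    simp only [hEnergy, ← hL]
    norm_num
    ring_nf
  have hEn2 : hEnergy (-2) = Real.exp (2 * L^2 - 2 * L + 8) := by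
    simp only [hEnergy, log_neg_two, ← hL]
    norm_num
    ring_nf
  rw [hEnergy_zero, hE2, hEn2] at key
  simp only [smul_eq_mul] at key
  have key2 : Real.exp 8 ≤ Real.exp (2 * L^2 - 2 * L + 8) := by linarith
  have hle : (8:ℝ) ≤ 2 * L^2 - 2 * L + 8 := Real.exp_le_exp.mp key2
  have hLpos : 0 < L := by
    rw [hL, lam1_two]
    apply Real.log_pos
    nlinarith [Real.sqrt_nonneg 2, Real.sq_sqrt (show (0:ℝ) ≤ 2 by norm_num)]
  have hLlt : L < 1 := by
    rw [hL, lam1_two]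
    have hs : Real.sqrt 2 < 1.5 := by
      nlinarith [Real.sq_sqrt (show (0:ℝ) ≤ 2 by norm_num), Real.sqrt_nonneg 2]
    have he : (2.5:ℝ) < Real.exp 1 := by
      have := Real.exp_one_gt_d9; linarith
    rw [Real.log_lt_iff_lt_exp (by positivity)]
    linarith
  nlinarith
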